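/- arXiv:1808.06175 — 2 statements merged into one kernel-verified Lean document; each statement's English description precedes it below -/
import Mathlib

section
/- Under the probabilistic sharing model, the blocking probability B1(x1,x2) of provider 1 is strictly decreasing in x2 on (0,1): its partial derivative with respect to x2 is strictly negative. -/
open Finset

noncomputable def coefM1 (N1 N2 : ℕ) (a1 a2 : ℝ) : ℝ :=
  a1 ^ N1 / (Nat.factorial N1 : ℝ) * ∑ j ∈ Finset.range (N2 + 1), a2 ^ j / (Nat.factorial j : ℝ)

noncomputable def coefU1 (N1 N2 : ℕ) (a1 a2 : ℝ) (i : ℕ) : ℝ :=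
  a1 ^ (N1 - i) / (Nat.factorial (N1 - i) : ℝ) * (a2 ^ (N2 + i) / (Nat.factorial (N2 + i) : ℝ))

noncomputable def coefV1 (N1 N2 : ℕ) (a1 a2 : ℝ) (j : ℕ) : ℝ :=
  (1 - ((N1 : ℝ) + j) / a1) * (a1 ^ (N1 + j) / (Nat.factorial (N1 + j) : ℝ)) *
    ∑ i ∈ Finset.range (N2 - j + 1), a2 ^ i / (Nat.factorial i : ℝ)

noncomputable def coefD (N1 N2 : ℕ) (a1 a2 : ℝ) : ℝ :=
  (∑ i ∈ Finset.range (N1 + 1), a1 ^ i / (Nat.factorial i : ℝ)) *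
    ∑ j ∈ Finset.range (N2 + 1), a2 ^ j / (Nat.factorial j : ℝ)

noncomputable def coefU (N1 N2 : ℕ) (a1 a2 : ℝ) (i : ℕ) : ℝ :=
  (a2 ^ (N2 + i) / (Nat.factorial (N2 + i) : ℝ)) *
    ∑ j ∈ Finset.range (N1 - i + 1), a1 ^ j / (Nat.factorial j : ℝ)

noncomputable def coefV (N1 N2 : ℕ) (a1 a2 : ℝ) (j : ℕ) : ℝ :=
  (a1 ^ (N1 + j) / (Nat.factorial (N1 + j) : ℝ)) *
    ∑ i ∈ Finset.range (N2 - j + 1), a2 ^ i / (Nat.factorial i : ℝ)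

namespace PsAux

noncomputable def expS (a : ℝ) (n : ℕ) : ℝ :=
  ∑ i ∈ Finset.range (n + 1), a ^ i / (Nat.factorial i : ℝ)

lemma fact_pos (n : ℕ) : (0:ℝ) < (Nat.factorial n : ℝ) := by
  exact_mod_cast n.factorial_pos

lemma expS_pos {a : ℝ} (ha : 0 < a) (n : ℕ) : 0 < expS a n :=
  Finset.sum_pos (fun i _ => div_pos (pow_pos ha i) (fact_pos i)) nonempty_range_add_one

lemma key_ratio {a : ℝ} (ha : 0 < a) (n : ℕ) :
    a * ∑ m ∈ Finset.range n, a ^ m / (Nat.factorial m : ℝ) ≤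
      (n : ℝ) * ∑ m ∈ Finset.range (n + 1), a ^ m / (Nat.factorial m : ℝ) := by
  rw [Finset.mul_sum]
  have h1 : ∀ m ∈ Finset.range n, a * (a ^ m / (Nat.factorial m : ℝ)) =
      ((m : ℝ) + 1) * (a ^ (m+1) / (Nat.factorial (m+1) : ℝ)) := by
    intro m _
    have hf : (Nat.factorial (m+1) : ℝ) = ((m:ℝ)+1) * (Nat.factorial m : ℝ) := by
      push_cast [Nat.factorial_succ]; ring
    rw [hf]
    have h0 : (Nat.factorial m : ℝ) ≠ 0 := (fact_pos m).ne'
    have h1 : ((m:ℝ)+1) ≠ 0 := by positivity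
    field_simp
    ring
  rw [Finset.sum_congr rfl h1]
  have h2 : ∑ m ∈ Finset.range n, ((m : ℝ) + 1) * (a ^ (m+1) / (Nat.factorial (m+1) : ℝ)) ≤
      ∑ m ∈ Finset.range n, (n : ℝ) * (a ^ (m+1) / (Nat.factorial (m+1) : ℝ)) := by
    apply Finset.sum_le_sum
    intro m hm
    have : (m : ℝ) + 1 ≤ (n : ℝ) := by
      exact_mod_cast Nat.succ_le_of_lt (Finset.mem_range.mp hm)
    exact mul_le_mul_of_nonneg_right this (by positivity)
  refine h2.trans ?_
  rw [← Finset.mul_sum]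
  apply mul_le_mul_of_nonneg_left _ (Nat.cast_nonneg n)
  rw [Finset.sum_range_succ']
  simp only [pow_zero, Nat.factorial_zero, Nat.cast_one]
  nlinarith [pow_pos ha 0]

noncomputable def ww (N1 N2 : ℕ) (a1 a2 x1 : ℝ) (j : ℕ) : ℝ :=
  if j = 0 then coefD N1 N2 a1 a2 + ∑ i ∈ Finset.Icc 1 N1, coefU N1 N2 a1 a2 i * x1 ^ i
  else coefV N1 N2 a1 a2 j

noncomputable def hh (N1 N2 : ℕ) (a1 a2 x1 : ℝ) (j : ℕ) : ℝ :=
  if j = 0 then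
    expS a1 (N1 - 1) * expS a2 N2 +
      ∑ i ∈ Finset.Icc 1 N1, a2 ^ (N2 + i) / (Nat.factorial (N2 + i) : ℝ) *
        (∑ m ∈ Finset.range (N1 - i), a1 ^ m / (Nat.factorial m : ℝ)) * x1 ^ i
  else a1 ^ (N1 + j - 1) / (Nat.factorial (N1 + j - 1) : ℝ) * expS a2 (N2 - j)

section lemmas

variable {N1 N2 : ℕ} {a1 a2 x1 : ℝ}
variable (hN1 : 1 ≤ N1) (ha1 : 0 < a1) (ha2 : 0 < a2) (hx1 : 0 ≤ x1)

include ha1 ha2 in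
lemma coefV_pos (j : ℕ) : 0 < coefV N1 N2 a1 a2 j := by
  unfold coefV
  have := expS_pos ha2 (N2 - j)
  unfold expS at this
  positivity

include ha1 ha2 in
lemma coefD_pos : 0 < coefD N1 N2 a1 a2 := by
  unfold coefD
  have h1 := expS_pos ha1 N1
  have h2 := expS_pos ha2 N2
  unfold expS at h1 h2
  exact mul_pos h1 h2

include ha1 ha2 in
lemma coefU_nonneg (i : ℕ) : 0 ≤ coefU N1 N2 a1 a2 i := by
  unfold coefU
  have h1 : (0:ℝ) ≤ ∑ j ∈ Finset.range (N1 - i + 1), a1 ^ j / (Nat.factorial j : ℝ) :=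
    le_of_lt (by have := expS_pos ha1 (N1 - i); unfold expS at this; exact this)
  positivity

include ha1 ha2 hx1 in
lemma ww_pos (j : ℕ) : 0 < ww N1 N2 a1 a2 x1 j := by
  unfold ww
  split
  · apply add_pos_of_pos_of_nonneg (coefD_pos ha1 ha2)
    exact Finset.sum_nonneg fun i _ => mul_nonneg (coefU_nonneg ha1 ha2 i) (pow_nonneg hx1 i)
  · exact coefV_pos ha1 ha2 j

include ha1 ha2 hx1 in
lemma hh_pos (j : ℕ) : 0 < hh N1 N2 a1 a2 x1 j := by
  unfold hh
  split
  · apply add_pos_of_pos_of_nonneg (mul_pos (expS_pos ha1 _) (expS_pos ha2 _))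
    refine Finset.sum_nonneg fun i _ => ?_
    have h1 : (0:ℝ) ≤ ∑ m ∈ Finset.range (N1 - i), a1 ^ m / (Nat.factorial m : ℝ) :=
      Finset.sum_nonneg fun m _ => by positivity
    positivity
  · exact mul_pos (by positivity) (expS_pos ha2 _)

include ha1 in
lemma ratio1 {j : ℕ} (hj : j ≠ 0) :
    a1 * hh N1 N2 a1 a2 x1 j = ((N1 : ℝ) + j) * ww N1 N2 a1 a2 x1 j := by
  obtain ⟨m, rfl⟩ : ∃ m, j = m + 1 := ⟨j - 1, by omega⟩
  simp only [ww, hh, if_neg (Nat.succ_ne_zero m), coefV]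
  have he : N1 + (m + 1) - 1 = N1 + m := by omega
  rw [he]
  have hE : expS a2 (N2 - (m+1)) = ∑ i ∈ Finset.range (N2 - (m + 1) + 1), a2 ^ i / (Nat.factorial i : ℝ) := rfl
  rw [← hE]
  have hf : (Nat.factorial (N1 + (m+1)) : ℝ) = ((N1:ℝ) + m + 1) * (Nat.factorial (N1 + m) : ℝ) := by
    have : N1 + (m+1) = (N1 + m) + 1 := by omega
    rw [this]
    push_cast [Nat.factorial_succ]
    ring
  have hp : a1 ^ (N1 + (m+1)) = a1 ^ (N1 + m) * a1 := by
    rw [← pow_succ]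
    rfl
  rw [hf, hp]
  have h0 : (Nat.factorial (N1 + m) : ℝ) ≠ 0 := (fact_pos _).ne'
  have h1 : ((N1:ℝ) + m + 1) ≠ 0 := by positivity
  push_cast
  field_simp
  ring

include hN1 ha1 ha2 hx1 in
lemma ratio0 : a1 * hh N1 N2 a1 a2 x1 0 ≤ (N1 : ℝ) * ww N1 N2 a1 a2 x1 0 := by
  simp only [ww, hh, reduceIte]
  rw [mul_add, mul_add]
  apply add_le_add
  · have h1 : expS a1 (N1 - 1) = ∑ m ∈ Finset.range N1, a1 ^ m / (Nat.factorial m : ℝ) := by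
      unfold expS
      rw [show N1 - 1 + 1 = N1 from by omega]
    have h2 : coefD N1 N2 a1 a2 = (∑ m ∈ Finset.range (N1+1), a1 ^ m / (Nat.factorial m : ℝ)) * expS a2 N2 := rfl
    rw [h1, h2, ← mul_assoc, ← mul_assoc]
    exact mul_le_mul_of_nonneg_right (key_ratio ha1 N1) (le_of_lt (expS_pos ha2 N2))
  · rw [Finset.mul_sum, Finset.mul_sum]
    apply Finset.sum_le_sum
    intro i hi
    have hc : (0:ℝ) ≤ a2 ^ (N2 + i) / (Nat.factorial (N2 + i) : ℝ) := by positivity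
    have hx : (0:ℝ) ≤ x1 ^ i := pow_nonneg hx1 i
    have hkey : a1 * ∑ m ∈ Finset.range (N1 - i), a1 ^ m / (Nat.factorial m : ℝ) ≤
        (N1 : ℝ) * ∑ m ∈ Finset.range (N1 - i + 1), a1 ^ m / (Nat.factorial m : ℝ) := by
      refine (key_ratio ha1 (N1 - i)).trans ?_
      apply mul_le_mul_of_nonneg_right
      · exact_mod_cast Nat.sub_le N1 i
      · exact le_of_lt (by have := expS_pos ha1 (N1 - i); unfold expS at this; exact this)
    calc a1 * (a2 ^ (N2 + i) / (Nat.factorial (N2 + i) : ℝ) *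
          (∑ m ∈ Finset.range (N1 - i), a1 ^ m / (Nat.factorial m : ℝ)) * x1 ^ i)
        = (a1 * ∑ m ∈ Finset.range (N1 - i), a1 ^ m / (Nat.factorial m : ℝ)) *
          (a2 ^ (N2 + i) / (Nat.factorial (N2 + i) : ℝ) * x1 ^ i) := by ring
      _ ≤ ((N1 : ℝ) * ∑ m ∈ Finset.range (N1 - i + 1), a1 ^ m / (Nat.factorial m : ℝ)) *
          (a2 ^ (N2 + i) / (Nat.factorial (N2 + i) : ℝ) * x1 ^ i) :=
          mul_le_mul_of_nonneg_right hkey (by positivity)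
      _ = (N1 : ℝ) * (coefU N1 N2 a1 a2 i * x1 ^ i) := by
          unfold coefU; ring

include hN1 ha1 ha2 hx1 in
lemma cross {j k : ℕ} (hjk : j < k) :
    hh N1 N2 a1 a2 x1 j * ww N1 N2 a1 a2 x1 k < ww N1 N2 a1 a2 x1 j * hh N1 N2 a1 a2 x1 k := by
  have hwj := ww_pos ha1 ha2 hx1 (N1 := N1) (N2 := N2) (a2 := a2) j
  have hwk := ww_pos ha1 ha2 hx1 (N1 := N1) (N2 := N2) (a2 := a2) k
  have hhj := hh_pos ha1 ha2 hx1 (N1 := N1) (N2 := N2) (a2 := a2) j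
  have hhk := hh_pos ha1 ha2 hx1 (N1 := N1) (N2 := N2) (a2 := a2) k
  have hk0 : k ≠ 0 := by omega
  have hrk := ratio1 ha1 (N1 := N1) (N2 := N2) (a2 := a2) (x1 := x1) hk0
  have hcast : (1:ℝ) ≤ (k:ℝ) := by exact_mod_cast Nat.one_le_iff_ne_zero.mpr hk0
  rcases Nat.eq_zero_or_pos j with hj0 | hjpos
  · subst hj0
    have hr0 := ratio0 hN1 ha1 ha2 hx1 (N2 := N2) (a2 := a2)
    have key : a1 * (hh N1 N2 a1 a2 x1 0 * ww N1 N2 a1 a2 x1 k) <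
        a1 * (ww N1 N2 a1 a2 x1 0 * hh N1 N2 a1 a2 x1 k) := by
      have h1 : a1 * (hh N1 N2 a1 a2 x1 0 * ww N1 N2 a1 a2 x1 k) ≤
          ((N1:ℝ) * ww N1 N2 a1 a2 x1 0) * ww N1 N2 a1 a2 x1 k := by
        rw [← mul_assoc]
        exact mul_le_mul_of_nonneg_right hr0 hwk.le
      have h2 : a1 * (ww N1 N2 a1 a2 x1 0 * hh N1 N2 a1 a2 x1 k) =
          (((N1:ℝ) + k) * ww N1 N2 a1 a2 x1 k) * ww N1 N2 a1 a2 x1 0 := by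
        rw [← hrk]; ring
      nlinarith [mul_pos hwj hwk]
    exact lt_of_mul_lt_mul_left key ha1.le
  · have hj0 : j ≠ 0 := by omega
    have hrj := ratio1 ha1 (N1 := N1) (N2 := N2) (a2 := a2) (x1 := x1) hj0
    have hjk' : ((N1:ℝ) + j) < ((N1:ℝ) + k) := by
      have : (j:ℝ) < (k:ℝ) := by exact_mod_cast hjk
      linarith
    have key : a1 * (hh N1 N2 a1 a2 x1 j * ww N1 N2 a1 a2 x1 k) <
        a1 * (ww N1 N2 a1 a2 x1 j * hh N1 N2 a1 a2 x1 k) := by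
      have h1 : a1 * (hh N1 N2 a1 a2 x1 j * ww N1 N2 a1 a2 x1 k) =
          ((N1:ℝ) + j) * ww N1 N2 a1 a2 x1 j * ww N1 N2 a1 a2 x1 k := by
        rw [← mul_assoc, hrj]
      have h2 : a1 * (ww N1 N2 a1 a2 x1 j * hh N1 N2 a1 a2 x1 k) =
          ((N1:ℝ) + k) * ww N1 N2 a1 a2 x1 k * ww N1 N2 a1 a2 x1 j := by
        rw [← hrk]; ring
      rw [h1, h2]
      nlinarith [mul_pos hwj hwk]
    exact lt_of_mul_lt_mul_left key ha1.le

include hN1 in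
lemma decomp0 :
    ww N1 N2 a1 a2 x1 0 - hh N1 N2 a1 a2 x1 0 =
      coefM1 N1 N2 a1 a2 + ∑ i ∈ Finset.Icc 1 N1, coefU1 N1 N2 a1 a2 i * x1 ^ i := by
  simp only [ww, hh, reduceIte]
  have hsplit : coefD N1 N2 a1 a2 =
      expS a1 (N1 - 1) * expS a2 N2 + coefM1 N1 N2 a1 a2 := by
    unfold coefD coefM1 expS
    rw [show N1 - 1 + 1 = N1 from by omega]
    rw [Finset.sum_range_succ, add_mul]
  have hterm : ∀ i ∈ Finset.Icc 1 N1,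
      coefU N1 N2 a1 a2 i * x1 ^ i -
        a2 ^ (N2 + i) / (Nat.factorial (N2 + i) : ℝ) *
          (∑ m ∈ Finset.range (N1 - i), a1 ^ m / (Nat.factorial m : ℝ)) * x1 ^ i =
      coefU1 N1 N2 a1 a2 i * x1 ^ i := by
    intro i _
    unfold coefU coefU1
    rw [Finset.sum_range_succ]
    ring
  rw [hsplit]
  rw [show ∀ A B C D : ℝ, A + B + C - (A + D) = B + (C - D) from by intros; ring]
  congr 1
  rw [← Finset.sum_sub_distrib]
  exact Finset.sum_congr rfl hterm

include ha1 in
lemma decompj {j : ℕ} (hj : j ≠ 0) :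
    ww N1 N2 a1 a2 x1 j - hh N1 N2 a1 a2 x1 j = coefV1 N1 N2 a1 a2 j := by
  obtain ⟨m, rfl⟩ : ∃ m, j = m + 1 := ⟨j - 1, by omega⟩
  simp only [ww, hh, if_neg (Nat.succ_ne_zero m), coefV, coefV1]
  have he : N1 + (m + 1) - 1 = N1 + m := by omega
  rw [he]
  have hE : expS a2 (N2 - (m+1)) =
      ∑ i ∈ Finset.range (N2 - (m + 1) + 1), a2 ^ i / (Nat.factorial i : ℝ) := rfl
  rw [← hE]
  have hf : (Nat.factorial (N1 + (m+1)) : ℝ) = ((N1:ℝ) + m + 1) * (Nat.factorial (N1 + m) : ℝ) := by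
    have : N1 + (m+1) = (N1 + m) + 1 := by omega
    rw [this]
    push_cast [Nat.factorial_succ]
    ring
  have hp : a1 ^ (N1 + (m+1)) = a1 ^ (N1 + m) * a1 := by
    rw [← pow_succ]
    rfl
  rw [hf, hp]
  have h0 : (Nat.factorial (N1 + m) : ℝ) ≠ 0 := (fact_pos _).ne'
  have h1 : ((N1:ℝ) + m + 1) ≠ 0 := by positivity
  have ha1' : a1 ≠ 0 := ha1.ne'
  push_cast
  field_simp
  ring

end lemmas

noncomputable def FF (w h : ℕ → ℝ) (x : ℝ) (j k : ℕ) : ℝ :=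
  (j : ℝ) * (h j * w k - w j * h k) * (x ^ (j - 1) * x ^ k)

lemma main_pos {n : ℕ} (hn : 1 ≤ n) {w h : ℕ → ℝ} {x : ℝ} (hx : 0 < x)
    (hwpos : ∀ j, 0 < w j) (hhpos : ∀ j, 0 < h j)
    (hcross : ∀ j k, j < k → h j * w k < w j * h k) :
    (∑ j ∈ Finset.range (n + 1), h j * x ^ j) *
        (∑ k ∈ Finset.range (n + 1), (k : ℝ) * w k * x ^ (k - 1)) <
      (∑ j ∈ Finset.range (n + 1), (j : ℝ) * h j * x ^ (j - 1)) *
        (∑ k ∈ Finset.range (n + 1), w k * x ^ k) := by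
  rw [← sub_pos]
  have hGQ : (∑ j ∈ Finset.range (n + 1), (j : ℝ) * h j * x ^ (j - 1)) *
      (∑ k ∈ Finset.range (n + 1), w k * x ^ k) =
      ∑ j ∈ Finset.range (n + 1), ∑ k ∈ Finset.range (n + 1),
        ((j : ℝ) * h j * x ^ (j - 1)) * (w k * x ^ k) := Finset.sum_mul_sum _ _ _ _
  have hGQ2 : (∑ j ∈ Finset.range (n + 1), h j * x ^ j) *
      (∑ k ∈ Finset.range (n + 1), (k : ℝ) * w k * x ^ (k - 1)) =
      ∑ j ∈ Finset.range (n + 1), ∑ k ∈ Finset.range (n + 1),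
        (h k * x ^ k) * ((j : ℝ) * w j * x ^ (j - 1)) := by
    rw [Finset.sum_mul_sum]
    exact Finset.sum_comm
  have hE : (∑ j ∈ Finset.range (n + 1), (j : ℝ) * h j * x ^ (j - 1)) *
        (∑ k ∈ Finset.range (n + 1), w k * x ^ k) -
      (∑ j ∈ Finset.range (n + 1), h j * x ^ j) *
        (∑ k ∈ Finset.range (n + 1), (k : ℝ) * w k * x ^ (k - 1)) =
      ∑ j ∈ Finset.range (n + 1), ∑ k ∈ Finset.range (n + 1), FF w h x j k := by
    rw [hGQ, hGQ2, ← Finset.sum_sub_distrib]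
    refine Finset.sum_congr rfl fun j _ => ?_
    rw [← Finset.sum_sub_distrib]
    refine Finset.sum_congr rfl fun k _ => ?_
    unfold FF
    ring
  have hpair : ∀ j k : ℕ, j < k → 0 < FF w h x j k + FF w h x k j := by
    intro j k hjk
    have hc := hcross j k hjk
    rcases Nat.eq_zero_or_pos j with rfl | hjpos
    · have hF0 : FF w h x 0 k = 0 := by simp [FF]
      have hFk : 0 < FF w h x k 0 := by
        unfold FF
        have h1 : 0 < h k * w 0 - w k * h 0 := by nlinarith [hc]
        have h2 : (0:ℝ) < (k:ℝ) := by exact_mod_cast hjk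
        have h3 : (0:ℝ) < x ^ (k - 1) * x ^ 0 := by positivity
        exact mul_pos (mul_pos h2 h1) h3
      rw [hF0]
      linarith
    · have hxx : x ^ (k - 1) * x ^ j = x ^ (j - 1) * x ^ k := by
        rw [← pow_add, ← pow_add]
        congr 1
        omega
      unfold FF
      rw [hxx]
      have hA : h j * w k - w j * h k < 0 := by linarith
      have hjk' : (j:ℝ) < (k:ℝ) := by exact_mod_cast hjk
      have hx3 : (0:ℝ) < x ^ (j - 1) * x ^ k := by positivity
      nlinarith [mul_pos (mul_pos (sub_pos.mpr hjk') (neg_pos.mpr hA)) hx3]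
  have hnn : ∀ j k : ℕ, 0 ≤ FF w h x j k + FF w h x k j := by
    intro j k
    rcases lt_trichotomy j k with hlt | rfl | hgt
    · exact (hpair j k hlt).le
    · have hdiag : FF w h x j j = 0 := by
        unfold FF
        rw [show h j * w j - w j * h j = (0:ℝ) from by ring, mul_zero, zero_mul]
      rw [hdiag]
      simp
    · have := hpair k j hgt
      linarith
  have hsw : (∑ j ∈ Finset.range (n + 1), ∑ k ∈ Finset.range (n + 1), FF w h x j k) =
      ∑ j ∈ Finset.range (n + 1), ∑ k ∈ Finset.range (n + 1), FF w h x k j := Finset.sum_comm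
  have hdouble : 2 * (∑ j ∈ Finset.range (n + 1), ∑ k ∈ Finset.range (n + 1), FF w h x j k) =
      ∑ j ∈ Finset.range (n + 1), ∑ k ∈ Finset.range (n + 1), (FF w h x j k + FF w h x k j) := by
    calc 2 * (∑ j ∈ Finset.range (n + 1), ∑ k ∈ Finset.range (n + 1), FF w h x j k)
        = (∑ j ∈ Finset.range (n + 1), ∑ k ∈ Finset.range (n + 1), FF w h x j k) +
          ∑ j ∈ Finset.range (n + 1), ∑ k ∈ Finset.range (n + 1), FF w h x k j := by
          rw [← hsw]; ring
      _ = ∑ j ∈ Finset.range (n + 1), ((∑ k ∈ Finset.range (n + 1), FF w h x j k) +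
            ∑ k ∈ Finset.range (n + 1), FF w h x k j) := by
          rw [← Finset.sum_add_distrib]
      _ = ∑ j ∈ Finset.range (n + 1), ∑ k ∈ Finset.range (n + 1), (FF w h x j k + FF w h x k j) :=
          Finset.sum_congr rfl fun j _ => (Finset.sum_add_distrib).symm
  have hsum : 0 < ∑ j ∈ Finset.range (n + 1), ∑ k ∈ Finset.range (n + 1),
      (FF w h x j k + FF w h x k j) := by
    apply Finset.sum_pos'
    · intro j _
      exact Finset.sum_nonneg fun k _ => hnn j k
    · refine ⟨0, Finset.mem_range.mpr (by omega), ?_⟩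
      apply Finset.sum_pos'
      · intro k _
        exact hnn 0 k
      · exact ⟨1, Finset.mem_range.mpr (by omega), hpair 0 1 one_pos⟩
  rw [hE]
  linarith

end PsAux

/-- Blocking probability of provider 1 under the probabilistic sharing model,
as a rational function of the sharing parameters `(x1, x2)`. -/
noncomputable def psB1 (N1 N2 : ℕ) (a1 a2 x1 x2 : ℝ) : ℝ :=
  (coefM1 N1 N2 a1 a2 + (∑ i ∈ Finset.Icc 1 N1, coefU1 N1 N2 a1 a2 i * x1 ^ i) +
      ∑ j ∈ Finset.Icc 1 N2, coefV1 N1 N2 a1 a2 j * x2 ^ j) /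
    (coefD N1 N2 a1 a2 + (∑ i ∈ Finset.Icc 1 N1, coefU N1 N2 a1 a2 i * x1 ^ i) +
      ∑ j ∈ Finset.Icc 1 N2, coefV N1 N2 a1 a2 j * x2 ^ j)

theorem psB1_strict_anti_in_x2 (N1 N2 : ℕ) (a1 a2 : ℝ)
    (hN1 : 1 ≤ N1) (hN2 : 1 ≤ N2) (ha1 : 0 < a1) (ha2 : 0 < a2)
    (x1 x2 : ℝ) (hx1 : x1 ∈ Set.Icc (0 : ℝ) 1) (hx2 : x2 ∈ Set.Ioo (0 : ℝ) 1) :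
    deriv (fun y => psB1 N1 N2 a1 a2 x1 y) x2 < 0 := by
  obtain ⟨hx1l, -⟩ := hx1
  obtain ⟨hx2l, -⟩ := hx2
  have hins : Finset.range (N2 + 1) = insert 0 (Finset.Icc 1 N2) := by
    ext m
    simp only [Finset.mem_range, Finset.mem_insert, Finset.mem_Icc]
    omega
  have h0notin : (0 : ℕ) ∉ Finset.Icc 1 N2 := by simp
  -- identification of denominator with the `ww` sum
  have hQ_eq : coefD N1 N2 a1 a2 + (∑ i ∈ Finset.Icc 1 N1, coefU N1 N2 a1 a2 i * x1 ^ i) +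
      ∑ j ∈ Finset.Icc 1 N2, coefV N1 N2 a1 a2 j * x2 ^ j =
      ∑ k ∈ Finset.range (N2 + 1), PsAux.ww N1 N2 a1 a2 x1 k * x2 ^ k := by
    rw [hins, Finset.sum_insert h0notin]
    have h0 : PsAux.ww N1 N2 a1 a2 x1 0 * x2 ^ 0 =
        coefD N1 N2 a1 a2 + ∑ i ∈ Finset.Icc 1 N1, coefU N1 N2 a1 a2 i * x1 ^ i := by
      simp [PsAux.ww]
    rw [h0]
    congr 1
    refine Finset.sum_congr rfl fun j hj => ?_
    have hj0 : j ≠ 0 := by have := (Finset.mem_Icc.mp hj).1; omega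
    simp [PsAux.ww, hj0]
  have hQ'_eq : ∑ j ∈ Finset.Icc 1 N2, coefV N1 N2 a1 a2 j * ((j : ℝ) * x2 ^ (j - 1)) =
      ∑ k ∈ Finset.range (N2 + 1), (k : ℝ) * PsAux.ww N1 N2 a1 a2 x1 k * x2 ^ (k - 1) := by
    rw [hins, Finset.sum_insert h0notin]
    simp only [Nat.cast_zero, zero_mul, zero_add]
    refine Finset.sum_congr rfl fun j hj => ?_
    have hj0 : j ≠ 0 := by have := (Finset.mem_Icc.mp hj).1; omega
    simp only [PsAux.ww, if_neg hj0]
    ring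
  -- identification of numerator with `ww` minus `hh` sums
  have hQs : ∑ k ∈ Finset.range (N2 + 1), PsAux.ww N1 N2 a1 a2 x1 k * x2 ^ k =
      PsAux.ww N1 N2 a1 a2 x1 0 * x2 ^ 0 +
        ∑ j ∈ Finset.Icc 1 N2, PsAux.ww N1 N2 a1 a2 x1 j * x2 ^ j := by
    rw [hins, Finset.sum_insert h0notin]
  have hGs : ∑ k ∈ Finset.range (N2 + 1), PsAux.hh N1 N2 a1 a2 x1 k * x2 ^ k =
      PsAux.hh N1 N2 a1 a2 x1 0 * x2 ^ 0 +
        ∑ j ∈ Finset.Icc 1 N2, PsAux.hh N1 N2 a1 a2 x1 j * x2 ^ j := by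
    rw [hins, Finset.sum_insert h0notin]
  have hP_eq : coefM1 N1 N2 a1 a2 + (∑ i ∈ Finset.Icc 1 N1, coefU1 N1 N2 a1 a2 i * x1 ^ i) +
      ∑ j ∈ Finset.Icc 1 N2, coefV1 N1 N2 a1 a2 j * x2 ^ j =
      (∑ k ∈ Finset.range (N2 + 1), PsAux.ww N1 N2 a1 a2 x1 k * x2 ^ k) -
        ∑ k ∈ Finset.range (N2 + 1), PsAux.hh N1 N2 a1 a2 x1 k * x2 ^ k := by
    rw [hQs, hGs, ← PsAux.decomp0 hN1 (a2 := a2) (x1 := x1) (a1 := a1)]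
    have hsum : ∑ j ∈ Finset.Icc 1 N2, coefV1 N1 N2 a1 a2 j * x2 ^ j =
        ∑ j ∈ Finset.Icc 1 N2, (PsAux.ww N1 N2 a1 a2 x1 j * x2 ^ j -
          PsAux.hh N1 N2 a1 a2 x1 j * x2 ^ j) := by
      refine Finset.sum_congr rfl fun j hj => ?_
      have hj0 : j ≠ 0 := by have := (Finset.mem_Icc.mp hj).1; omega
      rw [← PsAux.decompj ha1 hj0 (N2 := N2) (x1 := x1) (a2 := a2)]
      ring
    rw [hsum, Finset.sum_sub_distrib]
    ring
  have hP'_eq : ∑ j ∈ Finset.Icc 1 N2, coefV1 N1 N2 a1 a2 j * ((j : ℝ) * x2 ^ (j - 1)) =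
      (∑ k ∈ Finset.range (N2 + 1), (k : ℝ) * PsAux.ww N1 N2 a1 a2 x1 k * x2 ^ (k - 1)) -
        ∑ k ∈ Finset.range (N2 + 1), (k : ℝ) * PsAux.hh N1 N2 a1 a2 x1 k * x2 ^ (k - 1) := by
    rw [hins, Finset.sum_insert h0notin, Finset.sum_insert h0notin]
    simp only [Nat.cast_zero, zero_mul, zero_add]
    rw [← Finset.sum_sub_distrib]
    refine Finset.sum_congr rfl fun j hj => ?_
    have hj0 : j ≠ 0 := by have := (Finset.mem_Icc.mp hj).1; omega
    rw [← PsAux.decompj ha1 hj0 (N2 := N2) (x1 := x1) (a2 := a2)]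
    ring
  -- positivity of the denominator
  have hQpos : 0 < coefD N1 N2 a1 a2 + (∑ i ∈ Finset.Icc 1 N1, coefU N1 N2 a1 a2 i * x1 ^ i) +
      ∑ j ∈ Finset.Icc 1 N2, coefV N1 N2 a1 a2 j * x2 ^ j := by
    rw [hQ_eq]
    exact Finset.sum_pos
      (fun k _ => mul_pos (PsAux.ww_pos ha1 ha2 hx1l k) (pow_pos hx2l k))
      Finset.nonempty_range_add_one
  -- derivatives
  have hPder : HasDerivAt
      (fun y => coefM1 N1 N2 a1 a2 + (∑ i ∈ Finset.Icc 1 N1, coefU1 N1 N2 a1 a2 i * x1 ^ i) +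
        ∑ j ∈ Finset.Icc 1 N2, coefV1 N1 N2 a1 a2 j * y ^ j)
      (∑ j ∈ Finset.Icc 1 N2, coefV1 N1 N2 a1 a2 j * ((j : ℝ) * x2 ^ (j - 1))) x2 := by
    apply HasDerivAt.const_add
    exact HasDerivAt.fun_sum fun j _ => (hasDerivAt_pow j x2).const_mul _
  have hQder : HasDerivAt
      (fun y => coefD N1 N2 a1 a2 + (∑ i ∈ Finset.Icc 1 N1, coefU N1 N2 a1 a2 i * x1 ^ i) +
        ∑ j ∈ Finset.Icc 1 N2, coefV N1 N2 a1 a2 j * y ^ j)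
      (∑ j ∈ Finset.Icc 1 N2, coefV N1 N2 a1 a2 j * ((j : ℝ) * x2 ^ (j - 1))) x2 := by
    apply HasDerivAt.const_add
    exact HasDerivAt.fun_sum fun j _ => (hasDerivAt_pow j x2).const_mul _
  have hder : HasDerivAt (fun y => psB1 N1 N2 a1 a2 x1 y)
      (((∑ j ∈ Finset.Icc 1 N2, coefV1 N1 N2 a1 a2 j * ((j : ℝ) * x2 ^ (j - 1))) *
          (coefD N1 N2 a1 a2 + (∑ i ∈ Finset.Icc 1 N1, coefU N1 N2 a1 a2 i * x1 ^ i) +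
            ∑ j ∈ Finset.Icc 1 N2, coefV N1 N2 a1 a2 j * x2 ^ j) -
        (coefM1 N1 N2 a1 a2 + (∑ i ∈ Finset.Icc 1 N1, coefU1 N1 N2 a1 a2 i * x1 ^ i) +
            ∑ j ∈ Finset.Icc 1 N2, coefV1 N1 N2 a1 a2 j * x2 ^ j) *
          ∑ j ∈ Finset.Icc 1 N2, coefV N1 N2 a1 a2 j * ((j : ℝ) * x2 ^ (j - 1))) /
        (coefD N1 N2 a1 a2 + (∑ i ∈ Finset.Icc 1 N1, coefU N1 N2 a1 a2 i * x1 ^ i) +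
            ∑ j ∈ Finset.Icc 1 N2, coefV N1 N2 a1 a2 j * x2 ^ j) ^ 2) x2 := by
    simp only [psB1]
    exact hPder.div hQder hQpos.ne'
  rw [hder.deriv]
  apply div_neg_of_neg_of_pos _ (pow_pos hQpos 2)
  rw [hP_eq, hP'_eq, hQ_eq, hQ'_eq]
  have hmain := PsAux.main_pos hN2 hx2l
    (w := PsAux.ww N1 N2 a1 a2 x1) (h := PsAux.hh N1 N2 a1 a2 x1)
    (PsAux.ww_pos ha1 ha2 hx1l) (PsAux.hh_pos ha1 ha2 hx1l)
    (fun j k hjk => PsAux.cross hN1 ha1 ha2 hx1l hjk)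
  nlinarith [hmain]
end

section
/- Under the probabilistic sharing model, the blocking probability B1(x1,x2) of provider 1 is strictly increasing in x1 on (0,1): its partial derivative with respect to x1 is strictly positive. -/
open Finset

noncomputable def Esum (a : ℝ) (n : ℕ) : ℝ :=
  ∑ j ∈ Finset.range (n + 1), a ^ j / (Nat.factorial j : ℝ)

lemma Esum_pos {a : ℝ} (ha : 0 < a) (n : ℕ) : 0 < Esum a n := by
  apply Finset.sum_pos
  · intro j _; positivity
  · exact ⟨0, by simp⟩

lemma fact_mul_fact_le {j p : ℕ} (h : j ≤ p) (d : ℕ) :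
    Nat.factorial p * Nat.factorial (j + d) ≤ Nat.factorial (p + d) * Nat.factorial j := by
  induction d with
  | zero => simp [Nat.mul_comm]
  | succ d ih =>
      have e1 : j + (d + 1) = (j + d) + 1 := by omega
      have e2 : p + (d + 1) = (p + d) + 1 := by omega
      rw [e1, e2, Nat.factorial_succ, Nat.factorial_succ]
      calc Nat.factorial p * ((j + d + 1) * Nat.factorial (j + d))
          = (j + d + 1) * (Nat.factorial p * Nat.factorial (j + d)) := by ring
        _ ≤ (p + d + 1) * (Nat.factorial (p + d) * Nat.factorial j) :=
            Nat.mul_le_mul (by omega) ih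
        _ = (p + d + 1) * Nat.factorial (p + d) * Nat.factorial j := by ring

lemma key_term_le {a : ℝ} (ha : 0 < a) {p q j : ℕ} (hpq : p ≤ q) (hj : j ≤ p) :
    a ^ q / (Nat.factorial q : ℝ) * (a ^ j / (Nat.factorial j : ℝ)) ≤
      a ^ p / (Nat.factorial p : ℝ) *
        (a ^ (j + (q - p)) / (Nat.factorial (j + (q - p)) : ℝ)) := by
  rw [div_mul_div_comm, div_mul_div_comm]
  have hepow : a ^ p * a ^ (j + (q - p)) = a ^ q * a ^ j := by
    rw [← pow_add, ← pow_add]; congr 1; omega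
  rw [hepow]
  have hfac : (Nat.factorial p * Nat.factorial (j + (q - p)) : ℝ) ≤
      (Nat.factorial q * Nat.factorial j : ℝ) := by
    have := fact_mul_fact_le hj (q - p)
    rw [show p + (q - p) = q from by omega] at this
    exact_mod_cast this
  gcongr

lemma key_le {a : ℝ} (ha : 0 < a) {p q : ℕ} (h : p ≤ q) :
    a ^ q / (Nat.factorial q : ℝ) * Esum a p ≤ a ^ p / (Nat.factorial p : ℝ) * Esum a q := by
  rw [Esum, Esum, Finset.mul_sum, Finset.mul_sum]
  have himg : (Finset.range (p + 1)).image (fun j => j + (q - p)) ⊆ Finset.range (q + 1) := by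
    intro m hm
    simp only [Finset.mem_image, Finset.mem_range] at hm ⊢
    obtain ⟨j, hj, rfl⟩ := hm; omega
  calc ∑ j ∈ Finset.range (p + 1), a ^ q / (Nat.factorial q : ℝ) * (a ^ j / (Nat.factorial j : ℝ))
      ≤ ∑ j ∈ Finset.range (p + 1), a ^ p / (Nat.factorial p : ℝ) *
          (a ^ (j + (q - p)) / (Nat.factorial (j + (q - p)) : ℝ)) := by
        apply Finset.sum_le_sum
        intro j hj
        exact key_term_le ha h (by simpa using Nat.lt_succ_iff.mp (Finset.mem_range.mp hj))
    _ = ∑ m ∈ (Finset.range (p + 1)).image (fun j => j + (q - p)),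
          a ^ p / (Nat.factorial p : ℝ) * (a ^ m / (Nat.factorial m : ℝ)) := by
        rw [Finset.sum_image]
        intro x _ y _ hxy; simp only at hxy; omega
    _ ≤ ∑ m ∈ Finset.range (q + 1),
          a ^ p / (Nat.factorial p : ℝ) * (a ^ m / (Nat.factorial m : ℝ)) := by
        apply Finset.sum_le_sum_of_subset_of_nonneg himg
        intro m _ _; positivity

lemma key_lt {a : ℝ} (ha : 0 < a) {p q : ℕ} (h : p < q) :
    a ^ q / (Nat.factorial q : ℝ) * Esum a p < a ^ p / (Nat.factorial p : ℝ) * Esum a q := by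
  rw [Esum, Esum, Finset.mul_sum, Finset.mul_sum]
  have himg : (Finset.range (p + 1)).image (fun j => j + (q - p)) ⊆ Finset.range (q + 1) := by
    intro m hm
    simp only [Finset.mem_image, Finset.mem_range] at hm ⊢
    obtain ⟨j, hj, rfl⟩ := hm; omega
  calc ∑ j ∈ Finset.range (p + 1), a ^ q / (Nat.factorial q : ℝ) * (a ^ j / (Nat.factorial j : ℝ))
      ≤ ∑ j ∈ Finset.range (p + 1), a ^ p / (Nat.factorial p : ℝ) *
          (a ^ (j + (q - p)) / (Nat.factorial (j + (q - p)) : ℝ)) := by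
        apply Finset.sum_le_sum
        intro j hj
        exact key_term_le ha h.le (by simpa using Nat.lt_succ_iff.mp (Finset.mem_range.mp hj))
    _ = ∑ m ∈ (Finset.range (p + 1)).image (fun j => j + (q - p)),
          a ^ p / (Nat.factorial p : ℝ) * (a ^ m / (Nat.factorial m : ℝ)) := by
        rw [Finset.sum_image]
        intro x _ y _ hxy; simp only at hxy; omega
    _ < ∑ m ∈ Finset.range (q + 1),
          a ^ p / (Nat.factorial p : ℝ) * (a ^ m / (Nat.factorial m : ℝ)) := by
        apply Finset.sum_lt_sum_of_subset himg (i := 0)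
        · simp
        · simp only [Finset.mem_image, Finset.mem_range]
          rintro ⟨j, hj, hj0⟩; omega
        · positivity
        · intro m _ _; positivity

lemma aE_le {a : ℝ} (ha : 0 ≤ a) (p : ℕ) :
    a * Esum a p ≤ a ^ (p + 1) / (Nat.factorial p : ℝ) + p * Esum a p := by
  induction p with
  | zero => simp [Esum]
  | succ p ih =>
      have hs : Esum a (p + 1) = Esum a p + a ^ (p + 1) / (Nat.factorial (p + 1) : ℝ) := by
        rw [Esum, Esum, Finset.sum_range_succ]
      have hE : 0 ≤ Esum a p := by
        apply Finset.sum_nonneg; intro j _; positivity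
      have hfs : (Nat.factorial (p + 1) : ℝ) = (p + 1) * (Nat.factorial p : ℝ) := by
        rw [Nat.factorial_succ]; push_cast; ring
      have hfp : (0:ℝ) < Nat.factorial p := by positivity
      have h1 : a ^ (p + 1) / (Nat.factorial p : ℝ)
          = (p + 1) * (a ^ (p + 1) / (Nat.factorial (p + 1) : ℝ)) := by
        rw [hfs]; field_simp
      have h2 : a * (a ^ (p + 1) / (Nat.factorial (p + 1) : ℝ))
          = a ^ (p + 2) / (Nat.factorial (p + 1) : ℝ) := by
        rw [pow_succ]; ring
      rw [hs]
      push_cast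
      nlinarith [ih, hE, h1]

lemma Esum_nonneg {a : ℝ} (ha : 0 ≤ a) (n : ℕ) : 0 ≤ Esum a n := by
  apply Finset.sum_nonneg; intro j _; positivity

lemma bracket_le {a : ℝ} (ha : 0 < a) {p : ℕ} {M : ℝ} (hM : (p : ℝ) ≤ M) :
    (1 - M / a) * Esum a p ≤ a ^ p / (Nat.factorial p : ℝ) := by
  have hD := aE_le ha.le p
  have hE : 0 ≤ Esum a p := Esum_nonneg ha.le p
  have hME : (p : ℝ) * Esum a p ≤ M * Esum a p := mul_le_mul_of_nonneg_right hM hE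
  have key : a * ((1 - M / a) * Esum a p) ≤ a * (a ^ p / (Nat.factorial p : ℝ)) := by
    have expand : a * ((1 - M / a) * Esum a p) = a * Esum a p - M * Esum a p := by
      field_simp
    have hps : a * (a ^ p / (Nat.factorial p : ℝ)) = a ^ (p + 1) / (Nat.factorial p : ℝ) := by
      rw [pow_succ]; ring
    rw [expand, hps]
    linarith
  exact le_of_mul_le_mul_left key ha

lemma coefM1_eq (N1 N2 : ℕ) (a1 a2 : ℝ) :
    coefM1 N1 N2 a1 a2 = a1 ^ N1 / (Nat.factorial N1 : ℝ) * Esum a2 N2 := rfl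

lemma coefU1_eq (N1 N2 : ℕ) (a1 a2 : ℝ) (i : ℕ) :
    coefU1 N1 N2 a1 a2 i
      = a1 ^ (N1 - i) / (Nat.factorial (N1 - i) : ℝ)
        * (a2 ^ (N2 + i) / (Nat.factorial (N2 + i) : ℝ)) := rfl

lemma coefV1_eq (N1 N2 : ℕ) (a1 a2 : ℝ) (j : ℕ) :
    coefV1 N1 N2 a1 a2 j
      = (1 - ((N1 : ℝ) + j) / a1) * (a1 ^ (N1 + j) / (Nat.factorial (N1 + j) : ℝ))
        * Esum a2 (N2 - j) := rfl

lemma coefD_eq (N1 N2 : ℕ) (a1 a2 : ℝ) :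
    coefD N1 N2 a1 a2 = Esum a1 N1 * Esum a2 N2 := rfl

lemma coefU_eq (N1 N2 : ℕ) (a1 a2 : ℝ) (i : ℕ) :
    coefU N1 N2 a1 a2 i
      = a2 ^ (N2 + i) / (Nat.factorial (N2 + i) : ℝ) * Esum a1 (N1 - i) := rfl

lemma coefV_eq (N1 N2 : ℕ) (a1 a2 : ℝ) (j : ℕ) :
    coefV N1 N2 a1 a2 j
      = a1 ^ (N1 + j) / (Nat.factorial (N1 + j) : ℝ) * Esum a2 (N2 - j) := rfl

lemma coefA_lt (N1 N2 : ℕ) (a1 a2 : ℝ) (ha1 : 0 < a1) (ha2 : 0 < a2)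
    {i : ℕ} (hi1 : 1 ≤ i) (hi2 : i ≤ N1) :
    coefU N1 N2 a1 a2 i * coefM1 N1 N2 a1 a2 < coefU1 N1 N2 a1 a2 i * coefD N1 N2 a1 a2 := by
  have hk := key_lt ha1 (show N1 - i < N1 by omega)
  have hPT : 0 < a2 ^ (N2 + i) / (Nat.factorial (N2 + i) : ℝ) * Esum a2 N2 :=
    mul_pos (by positivity) (Esum_pos ha2 N2)
  rw [coefU_eq, coefM1_eq, coefU1_eq, coefD_eq]
  calc a2 ^ (N2 + i) / (Nat.factorial (N2 + i) : ℝ) * Esum a1 (N1 - i)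
        * (a1 ^ N1 / (Nat.factorial N1 : ℝ) * Esum a2 N2)
      = (a2 ^ (N2 + i) / (Nat.factorial (N2 + i) : ℝ) * Esum a2 N2)
        * (a1 ^ N1 / (Nat.factorial N1 : ℝ) * Esum a1 (N1 - i)) := by ring
    _ < (a2 ^ (N2 + i) / (Nat.factorial (N2 + i) : ℝ) * Esum a2 N2)
        * (a1 ^ (N1 - i) / (Nat.factorial (N1 - i) : ℝ) * Esum a1 N1) :=
        mul_lt_mul_of_pos_left hk hPT
    _ = a1 ^ (N1 - i) / (Nat.factorial (N1 - i) : ℝ)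
        * (a2 ^ (N2 + i) / (Nat.factorial (N2 + i) : ℝ)) * (Esum a1 N1 * Esum a2 N2) := by ring

lemma coefB_le (N1 N2 : ℕ) (a1 a2 : ℝ) (ha1 : 0 < a1) (ha2 : 0 < a2)
    {k i : ℕ} (hki : k ≤ i) (hi2 : i ≤ N1) :
    coefU1 N1 N2 a1 a2 k * coefU N1 N2 a1 a2 i
      ≤ coefU1 N1 N2 a1 a2 i * coefU N1 N2 a1 a2 k := by
  have hk := key_le ha1 (show N1 - i ≤ N1 - k by omega)
  have hP : 0 ≤ a2 ^ (N2 + k) / (Nat.factorial (N2 + k) : ℝ)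
      * (a2 ^ (N2 + i) / (Nat.factorial (N2 + i) : ℝ)) := by positivity
  rw [coefU1_eq, coefU_eq, coefU1_eq, coefU_eq]
  calc a1 ^ (N1 - k) / (Nat.factorial (N1 - k) : ℝ)
        * (a2 ^ (N2 + k) / (Nat.factorial (N2 + k) : ℝ))
        * (a2 ^ (N2 + i) / (Nat.factorial (N2 + i) : ℝ) * Esum a1 (N1 - i))
      = (a2 ^ (N2 + k) / (Nat.factorial (N2 + k) : ℝ)
          * (a2 ^ (N2 + i) / (Nat.factorial (N2 + i) : ℝ)))
        * (a1 ^ (N1 - k) / (Nat.factorial (N1 - k) : ℝ) * Esum a1 (N1 - i)) := by ring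
    _ ≤ (a2 ^ (N2 + k) / (Nat.factorial (N2 + k) : ℝ)
          * (a2 ^ (N2 + i) / (Nat.factorial (N2 + i) : ℝ)))
        * (a1 ^ (N1 - i) / (Nat.factorial (N1 - i) : ℝ) * Esum a1 (N1 - k)) :=
        mul_le_mul_of_nonneg_left hk hP
    _ = a1 ^ (N1 - i) / (Nat.factorial (N1 - i) : ℝ)
        * (a2 ^ (N2 + i) / (Nat.factorial (N2 + i) : ℝ))
        * (a2 ^ (N2 + k) / (Nat.factorial (N2 + k) : ℝ) * Esum a1 (N1 - k)) := by ring

lemma coefC_le (N1 N2 : ℕ) (a1 a2 : ℝ) (ha1 : 0 < a1) (ha2 : 0 < a2)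
    {i j : ℕ} (hi2 : i ≤ N1) :
    coefU N1 N2 a1 a2 i * coefV1 N1 N2 a1 a2 j
      ≤ coefU1 N1 N2 a1 a2 i * coefV N1 N2 a1 a2 j := by
  have hbr : (1 - ((N1 : ℝ) + j) / a1) * Esum a1 (N1 - i)
      ≤ a1 ^ (N1 - i) / (Nat.factorial (N1 - i) : ℝ) := by
    apply bracket_le ha1
    have : ((N1 - i : ℕ) : ℝ) ≤ (N1 : ℝ) := by exact_mod_cast Nat.sub_le N1 i
    have hj : (0:ℝ) ≤ (j : ℝ) := by positivity
    linarith
  have hQ : 0 ≤ a2 ^ (N2 + i) / (Nat.factorial (N2 + i) : ℝ)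
      * (a1 ^ (N1 + j) / (Nat.factorial (N1 + j) : ℝ) * Esum a2 (N2 - j)) := by
    have := Esum_nonneg ha2.le (N2 - j)
    positivity
  rw [coefU_eq, coefV1_eq, coefU1_eq, coefV_eq]
  calc a2 ^ (N2 + i) / (Nat.factorial (N2 + i) : ℝ) * Esum a1 (N1 - i)
        * ((1 - ((N1 : ℝ) + j) / a1) * (a1 ^ (N1 + j) / (Nat.factorial (N1 + j) : ℝ))
            * Esum a2 (N2 - j))
      = (a2 ^ (N2 + i) / (Nat.factorial (N2 + i) : ℝ)
          * (a1 ^ (N1 + j) / (Nat.factorial (N1 + j) : ℝ) * Esum a2 (N2 - j)))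
        * ((1 - ((N1 : ℝ) + j) / a1) * Esum a1 (N1 - i)) := by ring
    _ ≤ (a2 ^ (N2 + i) / (Nat.factorial (N2 + i) : ℝ)
          * (a1 ^ (N1 + j) / (Nat.factorial (N1 + j) : ℝ) * Esum a2 (N2 - j)))
        * (a1 ^ (N1 - i) / (Nat.factorial (N1 - i) : ℝ)) :=
        mul_le_mul_of_nonneg_left hbr hQ
    _ = a1 ^ (N1 - i) / (Nat.factorial (N1 - i) : ℝ)
        * (a2 ^ (N2 + i) / (Nat.factorial (N2 + i) : ℝ))
        * (a1 ^ (N1 + j) / (Nat.factorial (N1 + j) : ℝ) * Esum a2 (N2 - j)) := by ring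
section PairAux

variable (u1 u : ℕ → ℝ)

lemma pair_nonneg (x : ℝ) (hx : 0 ≤ x) (i k : ℕ) (hi : 1 ≤ i) (hk : 1 ≤ k)
    (hik : k ≤ i → u1 k * u i ≤ u1 i * u k) (hki : i ≤ k → u1 i * u k ≤ u1 k * u i) :
    0 ≤ u1 i * ((i : ℝ) * x ^ (i - 1)) * (u k * x ^ k)
        - u1 i * x ^ i * (u k * ((k : ℝ) * x ^ (k - 1)))
      + (u1 k * ((k : ℝ) * x ^ (k - 1)) * (u i * x ^ i)
        - u1 k * x ^ k * (u i * ((i : ℝ) * x ^ (i - 1)))) := by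
  obtain ⟨i', rfl⟩ : ∃ i', i = i' + 1 := ⟨i - 1, by omega⟩
  obtain ⟨k', rfl⟩ : ∃ k', k = k' + 1 := ⟨k - 1, by omega⟩
  simp only [Nat.add_sub_cancel]
  push_cast
  rcases le_total k' i' with h | h
  · have hd : 0 ≤ u1 (i' + 1) * u (k' + 1) - u1 (k' + 1) * u (i' + 1) :=
      sub_nonneg.mpr (hik (by omega))
    have hc : (0:ℝ) ≤ (i' : ℝ) - (k' : ℝ) := by
      have : (k' : ℝ) ≤ (i' : ℝ) := by exact_mod_cast h
      linarith
    have h1 : 0 ≤ ((i' : ℝ) - (k' : ℝ))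
        * (u1 (i' + 1) * u (k' + 1) - u1 (k' + 1) * u (i' + 1)) * (x ^ i' * x ^ k' * x) :=
      mul_nonneg (mul_nonneg hc hd) (by positivity)
    exact h1.trans_eq (by ring)
  · have hd : u1 (i' + 1) * u (k' + 1) - u1 (k' + 1) * u (i' + 1) ≤ 0 :=
      sub_nonpos.mpr (hki (by omega))
    have hc : (i' : ℝ) - (k' : ℝ) ≤ 0 := by
      have : (i' : ℝ) ≤ (k' : ℝ) := by exact_mod_cast h
      linarith
    have h1 : 0 ≤ ((i' : ℝ) - (k' : ℝ))
        * (u1 (i' + 1) * u (k' + 1) - u1 (k' + 1) * u (i' + 1)) * (x ^ i' * x ^ k' * x) :=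
      mul_nonneg (mul_nonneg_iff.mpr (Or.inr ⟨hc, hd⟩)) (by positivity)
    exact h1.trans_eq (by ring)
end PairAux

lemma diag_sum_pos (u1 u : ℕ → ℝ) (m d x : ℝ) (hx : 0 < x) (N : ℕ) (hN : 1 ≤ N)
    (hmaj : ∀ i, 1 ≤ i → i ≤ N → u i * m < u1 i * d) :
    m * (∑ i ∈ Finset.Icc 1 N, u i * ((i : ℝ) * x ^ (i - 1)))
      < (∑ i ∈ Finset.Icc 1 N, u1 i * ((i : ℝ) * x ^ (i - 1))) * d := by
  rw [Finset.mul_sum, Finset.sum_mul]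
  apply Finset.sum_lt_sum_of_nonempty ⟨1, Finset.mem_Icc.mpr ⟨le_refl 1, hN⟩⟩
  intro i hi
  obtain ⟨h1, h2⟩ := Finset.mem_Icc.mp hi
  have hipos : (0 : ℝ) < (i : ℝ) := by exact_mod_cast h1
  have hixpos : (0 : ℝ) < (i : ℝ) * x ^ (i - 1) := mul_pos hipos (pow_pos hx _)
  calc m * (u i * ((i : ℝ) * x ^ (i - 1)))
      = ((i : ℝ) * x ^ (i - 1)) * (u i * m) := by ring
    _ < ((i : ℝ) * x ^ (i - 1)) * (u1 i * d) := mul_lt_mul_of_pos_left (hmaj i h1 h2) hixpos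
    _ = u1 i * ((i : ℝ) * x ^ (i - 1)) * d := by ring

lemma double_sum_nonneg (u1 u : ℕ → ℝ) (x : ℝ) (hx : 0 ≤ x) (N : ℕ)
    (hmaj : ∀ k i, k ≤ i → i ≤ N → u1 k * u i ≤ u1 i * u k) :
    (∑ i ∈ Finset.Icc 1 N, u1 i * x ^ i) * (∑ i ∈ Finset.Icc 1 N, u i * ((i : ℝ) * x ^ (i - 1)))
      ≤ (∑ i ∈ Finset.Icc 1 N, u1 i * ((i : ℝ) * x ^ (i - 1)))
        * (∑ i ∈ Finset.Icc 1 N, u i * x ^ i) := by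
  rw [← sub_nonneg]
  have hexp : (∑ i ∈ Finset.Icc 1 N, u1 i * ((i : ℝ) * x ^ (i - 1)))
        * (∑ i ∈ Finset.Icc 1 N, u i * x ^ i)
      - (∑ i ∈ Finset.Icc 1 N, u1 i * x ^ i)
        * (∑ i ∈ Finset.Icc 1 N, u i * ((i : ℝ) * x ^ (i - 1)))
      = ∑ i ∈ Finset.Icc 1 N, ∑ k ∈ Finset.Icc 1 N,
          (u1 i * ((i : ℝ) * x ^ (i - 1)) * (u k * x ^ k)
            - u1 i * x ^ i * (u k * ((k : ℝ) * x ^ (k - 1)))) := by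
    rw [Finset.sum_mul_sum, Finset.sum_mul_sum, ← Finset.sum_sub_distrib]
    exact Finset.sum_congr rfl fun i _ => by rw [Finset.sum_sub_distrib]
  rw [hexp]
  have hcomm : ∑ i ∈ Finset.Icc 1 N, ∑ k ∈ Finset.Icc 1 N,
        (u1 i * ((i : ℝ) * x ^ (i - 1)) * (u k * x ^ k)
          - u1 i * x ^ i * (u k * ((k : ℝ) * x ^ (k - 1))))
      = ∑ i ∈ Finset.Icc 1 N, ∑ k ∈ Finset.Icc 1 N,
        (u1 k * ((k : ℝ) * x ^ (k - 1)) * (u i * x ^ i)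
          - u1 k * x ^ k * (u i * ((i : ℝ) * x ^ (i - 1)))) := Finset.sum_comm
  have key : 0 ≤ ∑ i ∈ Finset.Icc 1 N, ∑ k ∈ Finset.Icc 1 N,
      ((u1 i * ((i : ℝ) * x ^ (i - 1)) * (u k * x ^ k)
          - u1 i * x ^ i * (u k * ((k : ℝ) * x ^ (k - 1))))
        + (u1 k * ((k : ℝ) * x ^ (k - 1)) * (u i * x ^ i)
          - u1 k * x ^ k * (u i * ((i : ℝ) * x ^ (i - 1))))) := by
    apply Finset.sum_nonneg
    intro i hi
    apply Finset.sum_nonneg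
    intro k hk
    obtain ⟨hi1, hi2⟩ := Finset.mem_Icc.mp hi
    obtain ⟨hk1, hk2⟩ := Finset.mem_Icc.mp hk
    exact pair_nonneg u1 u x hx i k hi1 hk1 (fun h => hmaj k i h hi2) (fun h => hmaj i k h hk2)
  simp only [Finset.sum_add_distrib] at key
  rw [← hcomm] at key
  linarith

lemma cross_sum_nonneg (u1 u v1 v : ℕ → ℝ) (x y : ℝ) (hx : 0 ≤ x) (hy : 0 ≤ y) (N M : ℕ)
    (hmaj : ∀ i j, i ≤ N → u i * v1 j ≤ u1 i * v j) :
    (∑ j ∈ Finset.Icc 1 M, v1 j * y ^ j)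
        * (∑ i ∈ Finset.Icc 1 N, u i * ((i : ℝ) * x ^ (i - 1)))
      ≤ (∑ i ∈ Finset.Icc 1 N, u1 i * ((i : ℝ) * x ^ (i - 1)))
        * (∑ j ∈ Finset.Icc 1 M, v j * y ^ j) := by
  rw [Finset.sum_mul_sum, Finset.sum_mul_sum]
  rw [show (∑ j ∈ Finset.Icc 1 M, ∑ i ∈ Finset.Icc 1 N,
      v1 j * y ^ j * (u i * ((i : ℝ) * x ^ (i - 1))))
    = ∑ i ∈ Finset.Icc 1 N, ∑ j ∈ Finset.Icc 1 M,
      v1 j * y ^ j * (u i * ((i : ℝ) * x ^ (i - 1))) from Finset.sum_comm]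
  apply Finset.sum_le_sum
  intro i hi
  apply Finset.sum_le_sum
  intro j hj
  obtain ⟨hi1, hi2⟩ := Finset.mem_Icc.mp hi
  have hC := hmaj i j hi2
  calc v1 j * y ^ j * (u i * ((i : ℝ) * x ^ (i - 1)))
      = ((i : ℝ) * x ^ (i - 1) * y ^ j) * (u i * v1 j) := by ring
    _ ≤ ((i : ℝ) * x ^ (i - 1) * y ^ j) * (u1 i * v j) :=
        mul_le_mul_of_nonneg_left hC (by positivity)
    _ = u1 i * ((i : ℝ) * x ^ (i - 1)) * (v j * y ^ j) := by ring

theorem psB1_strict_mono_in_x1 (N1 N2 : ℕ) (a1 a2 : ℝ)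
    (hN1 : 1 ≤ N1) (hN2 : 1 ≤ N2) (ha1 : 0 < a1) (ha2 : 0 < a2)
    (x1 x2 : ℝ) (hx1 : x1 ∈ Set.Ioo (0 : ℝ) 1) (hx2 : x2 ∈ Set.Icc (0 : ℝ) 1) :
    0 < deriv (fun y => psB1 N1 N2 a1 a2 y x2) x1 := by
  obtain ⟨hx0, hxlt⟩ := hx1
  obtain ⟨hx20, hx21⟩ := hx2
  have hunn : ∀ i, 0 ≤ coefU N1 N2 a1 a2 i := by
    intro i
    rw [coefU_eq]
    have := Esum_nonneg ha1.le (N1 - i)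
    positivity
  have hvnn : ∀ j, 0 ≤ coefV N1 N2 a1 a2 j := by
    intro j
    rw [coefV_eq]
    have := Esum_nonneg ha2.le (N2 - j)
    positivity
  have hdpos : 0 < coefD N1 N2 a1 a2 := by
    rw [coefD_eq]
    exact mul_pos (Esum_pos ha1 N1) (Esum_pos ha2 N2)
  have hQ : 0 < coefD N1 N2 a1 a2 + (∑ i ∈ Finset.Icc 1 N1, coefU N1 N2 a1 a2 i * x1 ^ i)
      + ∑ j ∈ Finset.Icc 1 N2, coefV N1 N2 a1 a2 j * x2 ^ j := by
    have h1 : 0 ≤ ∑ i ∈ Finset.Icc 1 N1, coefU N1 N2 a1 a2 i * x1 ^ i :=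
      Finset.sum_nonneg fun i _ => mul_nonneg (hunn i) (by positivity)
    have h2 : 0 ≤ ∑ j ∈ Finset.Icc 1 N2, coefV N1 N2 a1 a2 j * x2 ^ j :=
      Finset.sum_nonneg fun j _ => mul_nonneg (hvnn j) (by positivity)
    linarith
  have hnum : HasDerivAt (fun y => coefM1 N1 N2 a1 a2
      + (∑ i ∈ Finset.Icc 1 N1, coefU1 N1 N2 a1 a2 i * y ^ i)
      + ∑ j ∈ Finset.Icc 1 N2, coefV1 N1 N2 a1 a2 j * x2 ^ j)
      (∑ i ∈ Finset.Icc 1 N1, coefU1 N1 N2 a1 a2 i * ((i : ℝ) * x1 ^ (i - 1))) x1 := by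
    have h : HasDerivAt (fun y => ∑ i ∈ Finset.Icc 1 N1, coefU1 N1 N2 a1 a2 i * y ^ i)
        (∑ i ∈ Finset.Icc 1 N1, coefU1 N1 N2 a1 a2 i * ((i : ℝ) * x1 ^ (i - 1))) x1 :=
      HasDerivAt.fun_sum fun i _ => (hasDerivAt_pow i x1).const_mul _
    exact (h.const_add _).add_const _
  have hden : HasDerivAt (fun y => coefD N1 N2 a1 a2
      + (∑ i ∈ Finset.Icc 1 N1, coefU N1 N2 a1 a2 i * y ^ i)
      + ∑ j ∈ Finset.Icc 1 N2, coefV N1 N2 a1 a2 j * x2 ^ j)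
      (∑ i ∈ Finset.Icc 1 N1, coefU N1 N2 a1 a2 i * ((i : ℝ) * x1 ^ (i - 1))) x1 := by
    have h : HasDerivAt (fun y => ∑ i ∈ Finset.Icc 1 N1, coefU N1 N2 a1 a2 i * y ^ i)
        (∑ i ∈ Finset.Icc 1 N1, coefU N1 N2 a1 a2 i * ((i : ℝ) * x1 ^ (i - 1))) x1 :=
      HasDerivAt.fun_sum fun i _ => (hasDerivAt_pow i x1).const_mul _
    exact (h.const_add _).add_const _
  have hdiv := hnum.div hden (ne_of_gt hQ)
  have hdiv' : HasDerivAt (fun y => psB1 N1 N2 a1 a2 y x2)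
      (((∑ i ∈ Finset.Icc 1 N1, coefU1 N1 N2 a1 a2 i * ((i : ℝ) * x1 ^ (i - 1)))
          * (coefD N1 N2 a1 a2 + (∑ i ∈ Finset.Icc 1 N1, coefU N1 N2 a1 a2 i * x1 ^ i)
            + ∑ j ∈ Finset.Icc 1 N2, coefV N1 N2 a1 a2 j * x2 ^ j)
        - (coefM1 N1 N2 a1 a2 + (∑ i ∈ Finset.Icc 1 N1, coefU1 N1 N2 a1 a2 i * x1 ^ i)
            + ∑ j ∈ Finset.Icc 1 N2, coefV1 N1 N2 a1 a2 j * x2 ^ j)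
          * (∑ i ∈ Finset.Icc 1 N1, coefU N1 N2 a1 a2 i * ((i : ℝ) * x1 ^ (i - 1))))
        / (coefD N1 N2 a1 a2 + (∑ i ∈ Finset.Icc 1 N1, coefU N1 N2 a1 a2 i * x1 ^ i)
            + ∑ j ∈ Finset.Icc 1 N2, coefV N1 N2 a1 a2 j * x2 ^ j) ^ 2) x1 := hdiv
  rw [hdiv'.deriv]
  apply div_pos _ (pow_pos hQ 2)
  have e1 := diag_sum_pos (coefU1 N1 N2 a1 a2) (coefU N1 N2 a1 a2)
    (coefM1 N1 N2 a1 a2) (coefD N1 N2 a1 a2) x1 hx0 N1 hN1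
    (fun i h1 h2 => coefA_lt N1 N2 a1 a2 ha1 ha2 h1 h2)
  have e2 := double_sum_nonneg (coefU1 N1 N2 a1 a2) (coefU N1 N2 a1 a2) x1 hx0.le N1
    (fun k i hki hi => coefB_le N1 N2 a1 a2 ha1 ha2 hki hi)
  have e3 := cross_sum_nonneg (coefU1 N1 N2 a1 a2) (coefU N1 N2 a1 a2)
    (coefV1 N1 N2 a1 a2) (coefV N1 N2 a1 a2) x1 x2 hx0.le hx20 N1 N2
    (fun i j hi => coefC_le N1 N2 a1 a2 ha1 ha2 hi)
  nlinarith [e1, e2, e3]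
end
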